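/- Let k be a field of prime characteristic p, let n be an integer with n > 1 that is not divisible by p, let e be a nonnegative integer, and let b be the unique integer with p^e ≡ b (mod n) and 1 ≤ b ≤ n−1. Then the dimension over k of the quotient ring k[X,Y]/(X^{p^e}, Y^{p^e}, X^n − Y^n) equals n·p^e − b·(n − b). -/

import Mathlib

open MvPolynomial

set_option maxHeartbeats 1000000

noncomputable section Stmt0Aux

variable {k : Type*} [Field k]

variable (k) in
/-- The ideal `(X^q, Y^q, X^n - Y^n)`. -/
def Igen (n q : ℕ) : Ideal (MvPolynomial (Fin 2) k) :=
  Ideal.span {X 0 ^ q, X 1 ^ q, X 0 ^ n - X 1 ^ n}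

/-- Truncation exponent for component `c`. -/
def mu (n a b q c : ℕ) : ℕ := if c < b then q else a * n

variable (k) in
/-- The comparison module. -/
abbrev Tsp (n a b q : ℕ) : Type _ :=
  (c : Fin n) → AdjoinRoot ((Polynomial.X : Polynomial k) ^ (mu n a b q (c : ℕ)))

lemma g1_mem (n q : ℕ) : (X 0 : MvPolynomial (Fin 2) k) ^ q ∈ Igen k n q :=
  Ideal.subset_span (by simp)
lemma g2_mem (n q : ℕ) : (X 1 : MvPolynomial (Fin 2) k) ^ q ∈ Igen k n q :=
  Ideal.subset_span (by simp)
lemma g3_mem (n q : ℕ) : (X 0 : MvPolynomial (Fin 2) k) ^ n - X 1 ^ n ∈ Igen k n q :=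
  Ideal.subset_span (by simp)

lemma powpow_mem (n q u : ℕ) :
    (X 0 : MvPolynomial (Fin 2) k) ^ (n * u) - X 1 ^ (n * u) ∈ Igen k n q := by
  obtain ⟨c, hc⟩ := sub_dvd_pow_sub_pow ((X 0 : MvPolynomial (Fin 2) k) ^ n) (X 1 ^ n) u
  rw [pow_mul, pow_mul, hc]
  exact Ideal.mul_mem_right c _ (g3_mem n q)

lemma monomial_reduce (n q i j : ℕ) :
    (X 0 : MvPolynomial (Fin 2) k) ^ i * X 1 ^ j
      - X 0 ^ (i % n) * X 1 ^ (j + n * (i / n)) ∈ Igen k n q := by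
  set u := i / n with hu
  set r := i % n with hr
  have h : i = n * u + r := by rw [hu, hr]; exact (Nat.div_add_mod i n).symm
  have heq : (X 0 : MvPolynomial (Fin 2) k) ^ i * X 1 ^ j
      - X 0 ^ r * X 1 ^ (j + n * u)
      = (X 0 ^ r * X 1 ^ j) * ((X 0 : MvPolynomial (Fin 2) k) ^ (n * u) - X 1 ^ (n * u)) := by
    rw [h]; ring
  rw [heq]
  exact Ideal.mul_mem_left _ _ (powpow_mem n q u)

lemma keyA' (n a b q : ℕ) (hq : q = a * n + b) :
    (X 0 : MvPolynomial (Fin 2) k) ^ b * X 1 ^ (a * n) ∈ Igen k n q := by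
  have heq : (X 0 : MvPolynomial (Fin 2) k) ^ b * X 1 ^ (a * n)
      = X 0 ^ q - (X 0 ^ b) * ((X 0 : MvPolynomial (Fin 2) k) ^ (n * a) - X 1 ^ (n * a)) := by
    rw [hq]; ring
  rw [heq]
  exact sub_mem (g1_mem n q) (Ideal.mul_mem_left _ _ (powpow_mem n q a))

lemma keyA (n a b q : ℕ) (hq : q = a * n + b) (c m : ℕ) (hcb : b ≤ c) (hm : a * n ≤ m) :
    (X 0 : MvPolynomial (Fin 2) k) ^ c * X 1 ^ m ∈ Igen k n q := by
  have heq : (X 0 ^ (c - b) * X 1 ^ (m - a * n)) * ((X 0 : MvPolynomial (Fin 2) k) ^ b * X 1 ^ (a * n))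
      = X 0 ^ c * X 1 ^ m := by
    rw [mul_mul_mul_comm, ← pow_add, ← pow_add, Nat.sub_add_cancel hcb, Nat.sub_add_cancel hm]
  rw [← heq]
  exact Ideal.mul_mem_left _ _ (keyA' n a b q hq)

lemma keyAq (n a b q : ℕ) (c m : ℕ) (hm : q ≤ m) :
    (X 0 : MvPolynomial (Fin 2) k) ^ c * X 1 ^ m ∈ Igen k n q := by
  have heq : (X 0 ^ c * X 1 ^ (m - q)) * ((X 1 : MvPolynomial (Fin 2) k) ^ q)
      = X 0 ^ c * X 1 ^ m := by
    rw [mul_assoc, ← pow_add, Nat.sub_add_cancel hm]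
  rw [← heq]
  exact Ideal.mul_mem_left _ _ (g2_mem n q)


variable (k) in
/-- Standard image element: `Pi.single ⟨r,_⟩ (mk (X^e))`, or `0` if `r ≥ n`. -/
def smS (n a b q r e : ℕ) : Tsp k n a b q :=
  if hr : r < n then
    Pi.single (⟨r, hr⟩ : Fin n) (AdjoinRoot.mk _ (Polynomial.X ^ e)) else 0

lemma smS_eq (n a b q r e : ℕ) (hr : r < n) :
    smS k n a b q r e
      = Pi.single (⟨r, hr⟩ : Fin n) (AdjoinRoot.mk _ (Polynomial.X ^ e)) :=
  dif_pos hr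

lemma smS_zero (n a b q r e : ℕ) (h : mu n a b q r ≤ e) : smS k n a b q r e = 0 := by
  unfold smS; split_ifs with hr
  · have h0 : AdjoinRoot.mk ((Polynomial.X : Polynomial k) ^ (mu n a b q r))
        (Polynomial.X ^ e) = 0 := AdjoinRoot.mk_eq_zero.2 (pow_dvd_pow _ h)
    rw [h0, Pi.single_zero]
  · rfl

variable (k) in
/-- The comparison linear map. -/
def piT (n a b q : ℕ) : MvPolynomial (Fin 2) k →ₗ[k] Tsp k n a b q :=
  (basisMonomials (Fin 2) k).constr k fun d =>
    smS k n a b q (d 0 % n) (d 1 + n * (d 0 / n))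

lemma piT_monomial (n a b q : ℕ) (d : Fin 2 →₀ ℕ) :
    piT k n a b q (monomial d 1) = smS k n a b q (d 0 % n) (d 1 + n * (d 0 / n)) := by
  simpa [piT] using (basisMonomials (Fin 2) k).constr_basis k _ d

lemma arith_div (n a b q : ℕ) (hq : q = a * n + b) (hbn : b < n) (i : ℕ) :
    mu n a b q ((i + q) % n) ≤ n * ((i + q) / n) := by
  have hn : 0 < n := lt_of_le_of_lt (Nat.zero_le b) hbn
  set D := (i + q) / n with hD
  set R := (i + q) % n with hR
  have hDR : n * D + R = i + q := by rw [hD, hR]; exact Nat.div_add_mod _ n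
  have hRn : R < n := by rw [hR]; exact Nat.mod_lt _ hn
  have hq' : q = n * a + b := by rw [hq]; ring
  unfold mu; split_ifs with hRb
  · rcases le_or_gt D a with h | h
    · exfalso
      have h1 : n * D ≤ n * a := Nat.mul_le_mul_left n h
      linarith
    · have h1 : n * (a + 1) ≤ n * D := Nat.mul_le_mul_left n h
      have h2 : n * (a + 1) = n * a + n := by ring
      linarith
  · rcases le_or_gt a D with h | h
    · have h1 : n * a ≤ n * D := Nat.mul_le_mul_left n h
      have h2 : a * n = n * a := by ring
      linarith
    · exfalso
      have h1 : n * (D + 1) ≤ n * a := Nat.mul_le_mul_left n h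
      have h2 : n * (D + 1) = n * D + n := by ring
      linarith

lemma mu_le_q (n a b q : ℕ) (hq : q = a * n + b) (c : ℕ) : mu n a b q c ≤ q := by
  unfold mu; split_ifs
  · exact le_refl q
  · omega

/-- If `π` kills all monomial multiples of `g`, it kills all multiples. -/
lemma piT_mul_eq_zero (n a b q : ℕ) (g : MvPolynomial (Fin 2) k)
    (h : ∀ d : Fin 2 →₀ ℕ, piT k n a b q (monomial d 1 * g) = 0)
    (f : MvPolynomial (Fin 2) k) : piT k n a b q (f * g) = 0 := by
  have h2 : (piT k n a b q).comp (LinearMap.mulRight k g) = 0 :=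
    (basisMonomials (Fin 2) k).ext fun d => by
      simpa using h d
  simpa using LinearMap.congr_fun h2 f

lemma kill_g1 (n a b q : ℕ) (hq : q = a * n + b) (hbn : b < n)
    (d : Fin 2 →₀ ℕ) : piT k n a b q (monomial d 1 * X 0 ^ q) = 0 := by
  have hrw : monomial d 1 * (X 0 : MvPolynomial (Fin 2) k) ^ q
      = monomial (d + Finsupp.single 0 q) 1 := by
    rw [X_pow_eq_monomial, monomial_mul, mul_one]
  rw [hrw, piT_monomial]
  have e0 : ((d + Finsupp.single 0 q : Fin 2 →₀ ℕ)) 0 = d 0 + q := by simp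
  have e1 : ((d + Finsupp.single 0 q : Fin 2 →₀ ℕ)) 1 = d 1 := by simp
  rw [e0, e1]
  exact smS_zero n a b q _ _
    (le_trans (arith_div n a b q hq hbn (d 0)) (Nat.le_add_left _ _))

lemma kill_g2 (n a b q : ℕ) (hq : q = a * n + b)
    (d : Fin 2 →₀ ℕ) : piT k n a b q (monomial d 1 * X 1 ^ q) = 0 := by
  have hrw : monomial d 1 * (X 1 : MvPolynomial (Fin 2) k) ^ q
      = monomial (d + Finsupp.single 1 q) 1 := by
    rw [X_pow_eq_monomial, monomial_mul, mul_one]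
  rw [hrw, piT_monomial]
  have e0 : ((d + Finsupp.single 1 q : Fin 2 →₀ ℕ)) 0 = d 0 := by simp
  have e1 : ((d + Finsupp.single 1 q : Fin 2 →₀ ℕ)) 1 = d 1 + q := by simp
  rw [e0, e1]
  refine smS_zero n a b q _ _ ?_
  calc mu n a b q _ ≤ q := mu_le_q n a b q hq _
    _ ≤ d 1 + q := Nat.le_add_left _ _
    _ ≤ d 1 + q + n * (d 0 / n) := Nat.le_add_right _ _

lemma kill_g3 (n a b q : ℕ) (hn : 0 < n)
    (d : Fin 2 →₀ ℕ) : piT k n a b q (monomial d 1 * (X 0 ^ n - X 1 ^ n)) = 0 := by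
  have hrw : monomial d 1 * ((X 0 : MvPolynomial (Fin 2) k) ^ n - X 1 ^ n)
      = monomial (d + Finsupp.single 0 n) 1 - monomial (d + Finsupp.single 1 n) 1 := by
    rw [mul_sub, X_pow_eq_monomial, X_pow_eq_monomial, monomial_mul, monomial_mul, mul_one]
  rw [hrw, map_sub, piT_monomial, piT_monomial]
  have e00 : ((d + Finsupp.single 0 n : Fin 2 →₀ ℕ)) 0 = d 0 + n := by simp
  have e01 : ((d + Finsupp.single 0 n : Fin 2 →₀ ℕ)) 1 = d 1 := by simp
  have e10 : ((d + Finsupp.single 1 n : Fin 2 →₀ ℕ)) 0 = d 0 := by simp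
  have e11 : ((d + Finsupp.single 1 n : Fin 2 →₀ ℕ)) 1 = d 1 + n := by simp
  rw [e00, e01, e10, e11, Nat.add_mod_right, Nat.add_div_right _ hn]
  have heq : d 1 + n * (d 0 / n + 1) = d 1 + n + n * (d 0 / n) := by ring
  rw [heq, sub_self]

lemma piT_vanish (n a b q : ℕ) (hq : q = a * n + b) (hbn : b < n) :
    ∀ x ∈ Igen k n q, piT k n a b q x = 0 := by
  have hn : 0 < n := lt_of_le_of_lt (Nat.zero_le b) hbn
  intro x hx
  have H : ∀ f : MvPolynomial (Fin 2) k, piT k n a b q (f * x) = 0 := by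
    refine Submodule.span_induction
      (p := fun y _ => ∀ f : MvPolynomial (Fin 2) k, piT k n a b q (f * y) = 0)
      ?_ ?_ ?_ ?_ hx
    · intro y hy f
      simp only [Set.mem_insert_iff, Set.mem_singleton_iff] at hy
      rcases hy with rfl | rfl | rfl
      · exact piT_mul_eq_zero n a b q _ (kill_g1 n a b q hq hbn) f
      · exact piT_mul_eq_zero n a b q _ (kill_g2 n a b q hq) f
      · exact piT_mul_eq_zero n a b q _ (kill_g3 n a b q hn) f
    · intro f; rw [mul_zero, map_zero]
    · intro y z _ _ hy hz f
      rw [mul_add, map_add, hy, hz, add_zero]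
    · intro r y _ hy f
      rw [smul_eq_mul, ← mul_assoc]
      exact hy (f * r)
  simpa using H 1


lemma piT_std (n a b q : ℕ) (c : Fin n) (m : ℕ) :
    piT k n a b q (X 0 ^ (c : ℕ) * X 1 ^ m)
      = Pi.single c (AdjoinRoot.mk _ (Polynomial.X ^ m)) := by
  have hrw : (X 0 : MvPolynomial (Fin 2) k) ^ (c : ℕ) * X 1 ^ m
      = monomial (Finsupp.single 0 (c : ℕ) + Finsupp.single 1 m) 1 := by
    rw [X_pow_eq_monomial, X_pow_eq_monomial, monomial_mul, mul_one]
  rw [hrw, piT_monomial]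
  have e0 : ((Finsupp.single 0 (c : ℕ) + Finsupp.single 1 m : Fin 2 →₀ ℕ)) 0 = (c : ℕ) := by simp
  have e1 : ((Finsupp.single 0 (c : ℕ) + Finsupp.single 1 m : Fin 2 →₀ ℕ)) 1 = m := by simp
  rw [e0, e1, Nat.mod_eq_of_lt c.isLt, Nat.div_eq_of_lt c.isLt, Nat.mul_zero, Nat.add_zero,
    smS_eq n a b q _ _ c.isLt]

variable (k) in
/-- The candidate basis vectors of the quotient. -/
def stdv (n a b q : ℕ) : ((c : Fin n) × Fin (mu n a b q (c : ℕ)))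
    → (MvPolynomial (Fin 2) k ⧸ Igen k n q) :=
  fun s => Ideal.Quotient.mk _ (X 0 ^ (s.1 : ℕ) * X 1 ^ (s.2 : ℕ))


lemma single_sigma_apply {ι : Type*} [Fintype ι] [DecidableEq ι] {M : ι → Type*}
    [∀ i, AddCommMonoid (M i)] {κ : ι → Type*} [∀ i, Fintype (κ i)]
    (w : ∀ i, κ i → M i) (c₀ : ι) :
    (∑ s : Σ i, κ i, Pi.single s.1 (w s.1 s.2)) c₀ = ∑ j : κ c₀, w c₀ j := by
  rw [← Finset.univ_sigma_univ, Finset.sum_sigma, Finset.sum_apply]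
  rw [Finset.sum_eq_single c₀ (fun c _ hne => by
      rw [Finset.sum_apply]
      exact Finset.sum_eq_zero fun m _ => Pi.single_eq_of_ne (Ne.symm hne) _)
    (fun h => absurd (Finset.mem_univ c₀) h), Finset.sum_apply]
  exact Finset.sum_congr rfl fun m _ => Pi.single_eq_same _ _

lemma indep (n a b q : ℕ) (hq : q = a * n + b) (hbn : b < n) :
    LinearIndependent k (stdv k n a b q) := by
  rw [Fintype.linearIndependent_iff]
  intro g hg s₀
  obtain ⟨c₀, m₀⟩ := s₀
  set f : MvPolynomial (Fin 2) k := ∑ i : (c : Fin n) × Fin (mu n a b q (c : ℕ)),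
    g i • (X 0 ^ (i.1 : ℕ) * X 1 ^ (i.2 : ℕ)) with hfdef
  have hfI : f ∈ Igen k n q := by
    have h : Ideal.Quotient.mkₐ k (Igen k n q) f = 0 := by
      rw [hfdef, map_sum]
      simpa only [map_smul, Ideal.Quotient.mkₐ_eq_mk, stdv] using hg
    rw [Ideal.Quotient.mkₐ_eq_mk] at h
    exact Ideal.Quotient.eq_zero_iff_mem.1 h
  have h0 : (0 : Tsp k n a b q) = ∑ i : (c : Fin n) × Fin (mu n a b q (c : ℕ)),
      (Pi.single i.1
        (g i • AdjoinRoot.mk ((Polynomial.X : Polynomial k) ^ (mu n a b q ((i.1 : Fin n) : ℕ)))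
          (Polynomial.X ^ ((i.2 : Fin (mu n a b q ((i.1 : Fin n) : ℕ))) : ℕ)))
        : Tsp k n a b q) := by
    rw [← piT_vanish n a b q hq hbn f hfI, hfdef, map_sum]
    refine Finset.sum_congr rfl fun i _ => ?_
    rw [map_smul, piT_std n a b q i.1 (i.2 : ℕ), Pi.single_smul]
  have h1 := (congrFun h0 c₀).trans
    (single_sigma_apply (fun c m => g ⟨c, m⟩ •
      AdjoinRoot.mk ((Polynomial.X : Polynomial k) ^ (mu n a b q ((c : Fin n) : ℕ)))
        (Polynomial.X ^ ((m : Fin (mu n a b q ((c : Fin n) : ℕ))) : ℕ))) c₀)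
  have h2 : AdjoinRoot.mk ((Polynomial.X : Polynomial k) ^ (mu n a b q (c₀ : ℕ)))
      (∑ m : Fin (mu n a b q (c₀ : ℕ)), g ⟨c₀, m⟩ • Polynomial.X ^ (m : ℕ)) = 0 := by
    rw [map_sum]
    refine Eq.trans (Finset.sum_congr rfl fun m _ => ?_) h1.symm
    exact (AdjoinRoot.smul_mk _ _ _).symm
  obtain ⟨t, ht⟩ := AdjoinRoot.mk_eq_zero.1 h2
  have hc := congrArg (fun p => Polynomial.coeff p (m₀ : ℕ)) ht
  simp only [Polynomial.finset_sum_coeff] at hc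
  have hR : (Polynomial.X ^ (mu n a b q (c₀ : ℕ)) * t).coeff (m₀ : ℕ) = 0 := by
    rw [mul_comm, Polynomial.coeff_mul_X_pow']
    exact if_neg (not_le.2 m₀.isLt)
  have hL : ∑ m : Fin (mu n a b q (c₀ : ℕ)),
      (g ⟨c₀, m⟩ • (Polynomial.X : Polynomial k) ^ (m : ℕ)).coeff (m₀ : ℕ) = g ⟨c₀, m₀⟩ := by
    rw [Finset.sum_eq_single m₀ (fun m _ hne => by
        rw [Polynomial.coeff_smul, Polynomial.coeff_X_pow,
          if_neg (fun hh => hne (Fin.ext hh.symm)), smul_zero])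
      (fun h => absurd (Finset.mem_univ m₀) h)]
    rw [Polynomial.coeff_smul, Polynomial.coeff_X_pow, if_pos rfl, smul_eq_mul, mul_one]
  rw [hL, hR] at hc
  exact hc

lemma spans (n a b q : ℕ) (hq : q = a * n + b) (hbn : b < n) :
    ⊤ ≤ Submodule.span k (Set.range (stdv k n a b q)) := by
  have hn : 0 < n := lt_of_le_of_lt (Nat.zero_le b) hbn
  intro x _
  obtain ⟨f, rfl⟩ := Ideal.Quotient.mk_surjective x
  have hf : f ∈ Submodule.span k (Set.range (basisMonomials (Fin 2) k)) := by
    rw [Module.Basis.span_eq]; exact Submodule.mem_top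
  refine Submodule.span_induction (p := fun y _ =>
    Ideal.Quotient.mk (Igen k n q) y ∈ Submodule.span k (Set.range (stdv k n a b q)))
    ?_ ?_ ?_ ?_ hf
  · rintro y ⟨d, rfl⟩
    show Ideal.Quotient.mk (Igen k n q) (basisMonomials (Fin 2) k d) ∈ _
    rw [coe_basisMonomials]
    set r := d 0 % n with hr
    set e := d 1 + n * (d 0 / n) with he
    have hd : (monomial d 1 : MvPolynomial (Fin 2) k) = X 0 ^ (d 0) * X 1 ^ (d 1) := by
      have hsplit : d = Finsupp.single 0 (d 0) + Finsupp.single 1 (d 1) := by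
        ext x; fin_cases x <;> simp
      conv_rhs => rw [X_pow_eq_monomial, X_pow_eq_monomial, monomial_mul, mul_one, ← hsplit]
    have hred : Ideal.Quotient.mk (Igen k n q) (monomial d 1)
        = Ideal.Quotient.mk (Igen k n q) (X 0 ^ r * X 1 ^ e) := by
      rw [hd, Ideal.Quotient.mk_eq_mk_iff_sub_mem]
      exact monomial_reduce n q (d 0) (d 1)
    rw [hred]
    rcases lt_or_ge e (mu n a b q r) with hlt | hge
    · exact Submodule.subset_span ⟨⟨⟨r, Nat.mod_lt _ hn⟩, ⟨e, hlt⟩⟩, rfl⟩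
    · have hmem : (X 0 : MvPolynomial (Fin 2) k) ^ r * X 1 ^ e ∈ Igen k n q := by
        rcases lt_or_ge r b with hrb | hrb
        · refine keyAq n a b q r e ?_
          unfold mu at hge; rwa [if_pos hrb] at hge
        · refine keyA n a b q hq r e hrb ?_
          unfold mu at hge; rwa [if_neg (not_lt.2 hrb)] at hge
      rw [Ideal.Quotient.eq_zero_iff_mem.2 hmem]
      exact Submodule.zero_mem _
  · show Ideal.Quotient.mk (Igen k n q) 0 ∈ _
    rw [RingHom.map_zero]; exact Submodule.zero_mem _
  · intro y z _ _ hy hz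
    show Ideal.Quotient.mk (Igen k n q) (y + z) ∈ _
    rw [RingHom.map_add]; exact Submodule.add_mem _ hy hz
  · intro c y _ hy
    show Ideal.Quotient.mk (Igen k n q) (c • y) ∈ _
    have h : Ideal.Quotient.mk (Igen k n q) (c • y)
        = c • Ideal.Quotient.mk (Igen k n q) y := by
      rw [← Ideal.Quotient.mkₐ_eq_mk k, map_smul]
    rw [h]; exact Submodule.smul_mem _ c hy

variable (k) in
def basQ (n a b q : ℕ) (hq : q = a * n + b) (hbn : b < n) :
    Module.Basis ((c : Fin n) × Fin (mu n a b q (c : ℕ))) k (MvPolynomial (Fin 2) k ⧸ Igen k n q) :=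
  Module.Basis.mk (indep n a b q hq hbn) (spans n a b q hq hbn)

theorem finrank_quot (n a b q : ℕ) (hq : q = a * n + b) (hbn : b < n) :
    Module.finrank k (MvPolynomial (Fin 2) k ⧸ Igen k n q)
      = b * q + (n - b) * (a * n) := by
  rw [Module.finrank_eq_card_basis (basQ k n a b q hq hbn), Fintype.card_sigma]
  simp only [Fintype.card_fin]
  rw [Fin.sum_univ_eq_sum_range (fun c => mu n a b q c) n]
  unfold mu
  rw [Finset.range_eq_Ico, ← Finset.sum_Ico_consecutive _ (Nat.zero_le b) (le_of_lt hbn)]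
  have h1 : ∑ c ∈ Finset.Ico 0 b, (if c < b then q else a * n) = b * q := by
    rw [Finset.sum_congr rfl fun c hc => if_pos (Finset.mem_Ico.1 hc).2]
    rw [Finset.sum_const, Nat.card_Ico, Nat.sub_zero, smul_eq_mul]
  have h2 : ∑ c ∈ Finset.Ico b n, (if c < b then q else a * n) = (n - b) * (a * n) := by
    rw [Finset.sum_congr rfl fun c hc => if_neg (not_lt.2 (Finset.mem_Ico.1 hc).1)]
    rw [Finset.sum_const, Nat.card_Ico, smul_eq_mul]
  rw [h1, h2]

end Stmt0Aux

/-- Theorem 1(1) of the paper (polynomial-ring form): for a field `k` of prime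
characteristic `p`, `n > 1` not divisible by `p`, and `b` the residue of `p^e` mod `n`
with `1 ≤ b ≤ n - 1`, the `k`-dimension of `k[X,Y]/(X^{p^e}, Y^{p^e}, X^n - Y^n)` is
`n·p^e - b·(n - b)`. -/
theorem stmt0 {k : Type*} [Field k] (p : ℕ) (hp : p.Prime) [CharP k p]
    (n : ℕ) (hn : 1 < n) (hpn : ¬ p ∣ n) (e b : ℕ)
    (hb : p ^ e ≡ b [MOD n]) (hb1 : 1 ≤ b) (hb2 : b ≤ n - 1) :
    (Module.finrank k (MvPolynomial (Fin 2) k ⧸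
        Ideal.span {(X 0 : MvPolynomial (Fin 2) k) ^ p ^ e, X 1 ^ p ^ e,
          X 0 ^ n - X 1 ^ n}) : ℤ) =
      (n : ℤ) * (p : ℤ) ^ e - (b : ℤ) * ((n : ℤ) - (b : ℤ)) := by
  have hbn : b < n := by omega
  have hqmod : p ^ e % n = b := by
    have h := hb
    unfold Nat.ModEq at h
    rwa [Nat.mod_eq_of_lt hbn] at h
  have hdm := Nat.div_add_mod (p ^ e) n
  rw [hqmod] at hdm
  have hq : p ^ e = (p ^ e / n) * n + b := by
    conv_lhs => rw [← hdm]
    ring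
  have hfr := finrank_quot (k := k) n (p ^ e / n) b (p ^ e) hq hbn
  show (Module.finrank k (MvPolynomial (Fin 2) k ⧸ Igen k n (p ^ e)) : ℤ) = _
  rw [hfr]
  have hble : b ≤ n := le_of_lt hbn
  have hqz : ((p : ℤ)) ^ e = ((p ^ e / n : ℕ) : ℤ) * n + b := by exact_mod_cast hq
  push_cast [Nat.cast_sub hble] at hqz ⊢
  linear_combination ((b : ℤ) - n) * hqz
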